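/- Let 0 < α < 1, let {a_j}_{j∈ℤ} be any increasing sequence of positive numbers, and let {v_j} be a bounded sequence with |v_j| ≤ V for all j. For N = (N₁, N₂) with N₁ < N₂, define K_N^α(s) = (1/(4^α Γ(α))) Σ_{j=N₁}^{N₂} v_j (a_{j+1}^{2α} e^{-a_{j+1}²/(4s)} − a_j^{2α} e^{-a_j²/(4s)}) / s^{1+α} for s > 0. Then there is a constant C depending only on α and V (not on N or the sequence {a_j}) such that |K_N^α(s)| ≤ C/s for all s > 0. -/

import Mathlib

open Real MeasureTheory Finset

/-- `t ↦ t^α e^{-t/τ}` is nondecreasing on `[0, ατ]`. -/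
lemma gmono_aux {α τ : ℝ} (hα : 0 < α) (hτ : 0 < τ) {t₁ t₂ : ℝ}
    (h0 : 0 ≤ t₁) (h12 : t₁ ≤ t₂) (h2 : t₂ ≤ α * τ) :
    t₁ ^ α * Real.exp (-t₁ / τ) ≤ t₂ ^ α * Real.exp (-t₂ / τ) := by
  rcases eq_or_lt_of_le h0 with h | h
  · rw [← h, Real.zero_rpow hα.ne', zero_mul]
    have ht2 : (0:ℝ) ≤ t₂ := h ▸ h12
    exact mul_nonneg (Real.rpow_nonneg ht2 _) (Real.exp_pos _).le
  · have ht2 : (0:ℝ) < t₂ := lt_of_lt_of_le h h12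
    rw [Real.rpow_def_of_pos h, Real.rpow_def_of_pos ht2, ← Real.exp_add, ← Real.exp_add,
      Real.exp_le_exp]
    have hlog : Real.log t₁ - Real.log t₂ ≤ (t₁ - t₂) / t₂ := by
      have h4 := Real.log_le_sub_one_of_pos (div_pos h ht2)
      rw [Real.log_div h.ne' ht2.ne'] at h4
      rw [sub_div, div_self ht2.ne']
      linarith
    have h5 : α * (Real.log t₁ - Real.log t₂) ≤ α * ((t₁ - t₂) / t₂) :=
      mul_le_mul_of_nonneg_left hlog hα.le
    have h6 : α * ((t₁ - t₂) / t₂) ≤ (t₁ - t₂) / τ := by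
      rw [mul_div_assoc'] at *
      rw [div_le_div_iff₀ ht2 hτ]
      nlinarith [mul_nonneg (sub_nonneg.2 h12) (sub_nonneg.2 h2)]
    have h7 : (t₁ - t₂) / τ = t₁ / τ - t₂ / τ := sub_div _ _ _
    rw [neg_div, neg_div]
    nlinarith [h5.trans h6]

/-- `t ↦ t^α e^{-t/τ}` is nonincreasing on `[ατ, ∞)`. -/
lemma ganti_aux {α τ : ℝ} (hα : 0 < α) (hτ : 0 < τ) {t₁ t₂ : ℝ}
    (h0 : α * τ ≤ t₁) (h12 : t₁ ≤ t₂) :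
    t₂ ^ α * Real.exp (-t₂ / τ) ≤ t₁ ^ α * Real.exp (-t₁ / τ) := by
  have ht1 : (0:ℝ) < t₁ := lt_of_lt_of_le (by positivity) h0
  have ht2 : (0:ℝ) < t₂ := lt_of_lt_of_le ht1 h12
  rw [Real.rpow_def_of_pos ht1, Real.rpow_def_of_pos ht2, ← Real.exp_add, ← Real.exp_add,
    Real.exp_le_exp]
  have hlog : Real.log t₂ - Real.log t₁ ≤ (t₂ - t₁) / t₁ := by
    have h4 := Real.log_le_sub_one_of_pos (div_pos ht2 ht1)
    rw [Real.log_div ht2.ne' ht1.ne'] at h4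
    rw [sub_div, div_self ht1.ne']
    linarith
  have h5 : α * (Real.log t₂ - Real.log t₁) ≤ α * ((t₂ - t₁) / t₁) :=
    mul_le_mul_of_nonneg_left hlog hα.le
  have h6 : α * ((t₂ - t₁) / t₁) ≤ (t₂ - t₁) / τ := by
    rw [mul_div_assoc'] at *
    rw [div_le_div_iff₀ ht1 hτ]
    nlinarith [mul_nonneg (sub_nonneg.2 h12) (sub_nonneg.2 h0)]
  have h7 : (t₂ - t₁) / τ = t₂ / τ - t₁ / τ := sub_div _ _ _
  rw [neg_div, neg_div]
  nlinarith [h5.trans h6]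

/-- Telescoping bound for variation of a sum of monotone and antitone sequences. -/
lemma tele_aux (u d : ℤ → ℝ) (hu : ∀ i j : ℤ, i ≤ j → u i ≤ u j)
    (hd : ∀ i j : ℤ, i ≤ j → d j ≤ d i) (N₁ N₂ : ℤ) (h : N₁ ≤ N₂) :
    ∑ j ∈ Finset.Icc N₁ N₂, |(u (j+1) + d (j+1)) - (u j + d j)| ≤
      (u (N₂+1) - u N₁) + (d N₁ - d (N₂+1)) := by
  refine Int.le_induction (motive := fun k _ => ∑ j ∈ Finset.Icc N₁ k, |(u (j+1) + d (j+1)) - (u j + d j)| ≤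
      (u (k+1) - u N₁) + (d N₁ - d (k+1))) ?_ (fun n hn ih => ?_) N₂ h
  · beta_reduce
    rw [Finset.Icc_self, Finset.sum_singleton]
    have h1 := hu N₁ (N₁+1) (by omega)
    have h2 := hd N₁ (N₁+1) (by omega)
    rw [abs_le]
    constructor <;> linarith
  · beta_reduce
    beta_reduce at ih
    have hins : Finset.Icc N₁ (n+1) = insert (n+1) (Finset.Icc N₁ n) := by
      ext x
      simp only [Finset.mem_Icc, Finset.mem_insert]
      omega
    rw [hins, Finset.sum_insert (by simp)]
    have h1 := hu (n+1) (n+1+1) (by omega)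
    have h2 := hd (n+1) (n+1+1) (by omega)
    have h3 : |(u (n+1+1) + d (n+1+1)) - (u (n+1) + d (n+1))| ≤
        (u (n+1+1) - u (n+1)) + (d (n+1) - d (n+1+1)) := by
      rw [abs_le]; constructor <;> linarith
    linarith

theorem stmt_6 (α V : ℝ) (hα0 : 0 < α) (hα1 : α < 1) (hV : 0 < V) :
    ∃ C > 0, ∀ (a v : ℤ → ℝ), (∀ j, 0 < a j) → StrictMono a →
      (∀ j, |v j| ≤ V) → ∀ N₁ N₂ : ℤ, N₁ < N₂ → ∀ s > (0:ℝ),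
      |(1 / (4 ^ α * Real.Gamma α)) *
          ∑ j ∈ Finset.Icc N₁ N₂,
            v j * ((a (j + 1)) ^ (2 * α) * Real.exp (-(a (j + 1)) ^ 2 / (4 * s)) -
                   (a j) ^ (2 * α) * Real.exp (-(a j) ^ 2 / (4 * s))) / s ^ (1 + α)|
        ≤ C / s := by
  have hΓ : 0 < Real.Gamma α := Real.Gamma_pos_of_pos hα0
  refine ⟨2 * V * α ^ α * Real.exp (-α) / Real.Gamma α, by positivity, ?_⟩
  intro a v ha hamono hv N₁ N₂ hN s hs
  set τ : ℝ := 4 * s with hτdef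
  have hτ : 0 < τ := by positivity
  set g : ℝ → ℝ := fun t => t ^ α * Real.exp (-t / τ) with hg
  set c : ℝ := α * τ with hc
  have hc0 : 0 < c := by positivity
  set b : ℤ → ℝ := fun j => (a j) ^ 2 with hb
  have hb0 : ∀ j, 0 < b j := fun j => by
    have := ha j; positivity
  have hbmono : Monotone b := by
    intro i j hij
    have : a i ≤ a j := hamono.monotone hij
    have hai := (ha i).le
    simp only [hb]
    nlinarith
  set u : ℤ → ℝ := fun j => g (min (b j) c) with hu
  set d : ℤ → ℝ := fun j => g (max (b j) c) with hd
  have hu_mono : ∀ i j : ℤ, i ≤ j → u i ≤ u j := by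
    intro i j hij
    exact gmono_aux hα0 hτ (le_min (hb0 i).le hc0.le)
      (min_le_min (hbmono hij) le_rfl) (min_le_right _ _)
  have hd_anti : ∀ i j : ℤ, i ≤ j → d j ≤ d i := by
    intro i j hij
    exact ganti_aux hα0 hτ (le_max_right _ _) (max_le_max (hbmono hij) le_rfl)
  have hu0 : ∀ j, 0 ≤ u j := fun j => by
    have h1 : 0 ≤ min (b j) c := le_min (hb0 j).le hc0.le
    simp only [hu, hg]; positivity
  have huM : ∀ j, u j ≤ g c := fun j =>
    gmono_aux hα0 hτ (le_min (hb0 j).le hc0.le) (min_le_right _ _) le_rfl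
  have hd0 : ∀ j, 0 ≤ d j := fun j => by
    have h1 : 0 ≤ max (b j) c := le_trans hc0.le (le_max_right _ _)
    simp only [hd, hg]; positivity
  have hdM : ∀ j, d j ≤ g c := fun j =>
    ganti_aux hα0 hτ le_rfl (le_max_right _ _)
  have hsplit : ∀ j, g (b j) = u j + d j - g c := by
    intro j
    rcases le_total (b j) c with h | h
    · simp only [hu, hd, min_eq_left h, max_eq_right h]; ring
    · simp only [hu, hd, min_eq_right h, max_eq_left h]; ring
  have hsum : ∑ j ∈ Finset.Icc N₁ N₂, |g (b (j+1)) - g (b j)| ≤ 2 * g c := by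
    have htel := tele_aux u d hu_mono hd_anti N₁ N₂ hN.le
    have heq : ∑ j ∈ Finset.Icc N₁ N₂, |g (b (j+1)) - g (b j)| =
        ∑ j ∈ Finset.Icc N₁ N₂, |(u (j+1) + d (j+1)) - (u j + d j)| := by
      refine Finset.sum_congr rfl fun j _ => ?_
      rw [hsplit, hsplit]
      congr 1
      ring
    rw [heq]
    have := hu0 N₁
    have := huM (N₂+1)
    have := hd0 (N₂+1)
    have := hdM N₁
    linarith
  have hterm : ∀ j, (a j) ^ (2*α) * Real.exp (-(a j)^2 / (4*s)) = g (b j) := by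
    intro j
    simp only [hg, hb, ← hτdef]
    congr 1
    rw [← Real.rpow_natCast (a j) 2, ← Real.rpow_mul (ha j).le]
    norm_num
  have hgc : g c = α ^ α * τ ^ α * Real.exp (-α) := by
    simp only [hg, hc]
    rw [Real.mul_rpow hα0.le hτ.le]
    congr 2
    field_simp
  -- rewrite the sum
  have hsum_eq : ∑ j ∈ Finset.Icc N₁ N₂,
      v j * ((a (j + 1)) ^ (2 * α) * Real.exp (-(a (j + 1)) ^ 2 / (4 * s)) -
             (a j) ^ (2 * α) * Real.exp (-(a j) ^ 2 / (4 * s))) / s ^ (1 + α) =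
      (∑ j ∈ Finset.Icc N₁ N₂, v j * (g (b (j+1)) - g (b j))) / s ^ (1 + α) := by
    rw [Finset.sum_div]
    refine Finset.sum_congr rfl fun j _ => ?_
    rw [hterm, hterm]
  rw [hsum_eq]
  have hS : |∑ j ∈ Finset.Icc N₁ N₂, v j * (g (b (j+1)) - g (b j))| ≤ 2 * V * g c := by
    calc |∑ j ∈ Finset.Icc N₁ N₂, v j * (g (b (j+1)) - g (b j))|
        ≤ ∑ j ∈ Finset.Icc N₁ N₂, |v j * (g (b (j+1)) - g (b j))| :=
          Finset.abs_sum_le_sum_abs _ _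
      _ ≤ ∑ j ∈ Finset.Icc N₁ N₂, V * |g (b (j+1)) - g (b j)| := by
          refine Finset.sum_le_sum fun j _ => ?_
          rw [abs_mul]
          exact mul_le_mul_of_nonneg_right (hv j) (abs_nonneg _)
      _ = V * ∑ j ∈ Finset.Icc N₁ N₂, |g (b (j+1)) - g (b j)| := by
          rw [Finset.mul_sum]
      _ ≤ V * (2 * g c) := mul_le_mul_of_nonneg_left hsum hV.le
      _ = 2 * V * g c := by ring
  have hpow : (0:ℝ) < s ^ (1+α) := Real.rpow_pos_of_pos hs _
  have h4 : (0:ℝ) < (4:ℝ) ^ α := Real.rpow_pos_of_pos (by norm_num) _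
  rw [abs_mul, abs_of_pos (by positivity : (0:ℝ) < 1 / (4 ^ α * Real.Gamma α)), abs_div,
    abs_of_pos hpow]
  have hfinal : 1 / (4 ^ α * Real.Gamma α) * (2 * V * g c / s ^ (1+α)) =
      2 * V * α ^ α * Real.exp (-α) / Real.Gamma α / s := by
    rw [hgc, hτdef, Real.mul_rpow (by norm_num : (0:ℝ) ≤ 4) hs.le,
      Real.rpow_add hs, Real.rpow_one]
    have hsα : (0:ℝ) < s ^ α := Real.rpow_pos_of_pos hs _
    field_simp
  rw [div_eq_mul_one_div (|∑ j ∈ Finset.Icc N₁ N₂, v j * (g (b (j+1)) - g (b j))|)]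
  calc 1 / (4 ^ α * Real.Gamma α) *
        (|∑ j ∈ Finset.Icc N₁ N₂, v j * (g (b (j+1)) - g (b j))| * (1 / s ^ (1+α)))
      ≤ 1 / (4 ^ α * Real.Gamma α) * (2 * V * g c * (1 / s ^ (1+α))) := by
        refine mul_le_mul_of_nonneg_left ?_ (by positivity)
        exact mul_le_mul_of_nonneg_right hS (by positivity)
    _ = 2 * V * α ^ α * Real.exp (-α) / Real.Gamma α / s := by
        rw [← hfinal]; ring
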